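/- Let g_0(z) = (1/2) Σ_{i,j} N_{ij} e^{z_i + z_j} − Σ_i z_i Σ_j N_{ij} s_i s_j with N symmetric nonnegative, zero diagonal. Then the Hessian of g_0 at z equals the signless Laplacian with weights N_{ij} e^{z_i + z_j}; i.e., ∇²g_0(z) = Σ_{i<j} N_{ij} e^{z_i + z_j} (e_i + e_j)(e_i + e_j)^T. Consequently, if the graph of N is connected and non-bipartite, g_0 is strictly convex on R^W, and z = ln s (entrywise logarithm, for s > 0 entrywise) is its unique critical point. -/

import Mathlib

lemma stmt16_graph {W : ℕ} (G : SimpleGraph (Fin W)) (hconn : G.Connected)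
    (hodd : ∃ (v : Fin W) (p : G.Walk v v), p.IsCycle ∧ Odd p.length)
    (d : Fin W → ℝ) (h : ∀ i j, G.Adj i j → d i + d j = 0) : ∀ i, d i = 0 := by
  have walk : ∀ {u v : Fin W} (p : G.Walk u v), d u = (-1 : ℝ) ^ p.length * d v := by
    intro u v p
    induction p with
    | nil => simp
    | @cons u a v hadj q ih =>
      have h1 : d u = - d a := by linarith [h u a hadj]
      rw [SimpleGraph.Walk.length_cons, pow_succ, h1, ih]; ring
  obtain ⟨v, p, _, hop⟩ := hodd
  have hv : d v = 0 := by
    have := walk p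
    rw [hop.neg_one_pow] at this
    linarith
  intro i
  obtain ⟨q⟩ := hconn.preconnected i v
  rw [walk q, hv, mul_zero]

lemma stmt16_sc (W : ℕ) (N : Matrix (Fin W) (Fin W) ℝ)
    (hsymm : ∀ a b, N a b = N b a) (hnonneg : ∀ a b, 0 ≤ N a b)
    (G : SimpleGraph (Fin W)) (hadj : ∀ i j, G.Adj i j ↔ i ≠ j ∧ 0 < N i j)
    (hconn : G.Connected)
    (hodd : ∃ (v : Fin W) (p : G.Walk v v), p.IsCycle ∧ Odd p.length)
    (s : Fin W → ℝ) :
    StrictConvexOn ℝ Set.univ (fun z : Fin W → ℝ =>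
        (1/2) * ∑ a, ∑ b, N a b * Real.exp (z a + z b)
          - ∑ a, z a * ∑ b, N a b * (s a * s b)) := by
  refine ⟨convex_univ, ?_⟩
  intro x _ y _ hxy a b ha hb hab
  obtain ⟨i0, j0, hN0, hne0⟩ : ∃ i j, 0 < N i j ∧ x i + x j ≠ y i + y j := by
    by_contra hc
    push_neg at hc
    apply hxy
    have key : ∀ i, x i - y i = 0 := by
      apply stmt16_graph G hconn hodd
      intro i j hij
      obtain ⟨hne, hpos⟩ := (hadj i j).mp hij
      have := hc i j hpos
      linarith
    funext i
    have := key i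
    linarith
  have hle : ∀ p q : ℝ, Real.exp (a * p + b * q) ≤ a * Real.exp p + b * Real.exp q := by
    intro p q
    have := convexOn_exp.2 (Set.mem_univ p) (Set.mem_univ q) ha.le hb.le hab
    simpa using this
  have hlt : ∀ p q : ℝ, p ≠ q →
      Real.exp (a * p + b * q) < a * Real.exp p + b * Real.exp q := by
    intro p q h
    have := strictConvexOn_exp.2 (Set.mem_univ p) (Set.mem_univ q) h ha hb hab
    simpa using this
  have termle : ∀ i j : Fin W,
      N i j * Real.exp ((a * x i + b * y i) + (a * x j + b * y j))
        ≤ a * (N i j * Real.exp (x i + x j)) + b * (N i j * Real.exp (y i + y j)) := by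
    intro i j
    have he : (a * x i + b * y i) + (a * x j + b * y j)
        = a * (x i + x j) + b * (y i + y j) := by ring
    rw [he]
    calc N i j * Real.exp (a * (x i + x j) + b * (y i + y j))
        ≤ N i j * (a * Real.exp (x i + x j) + b * Real.exp (y i + y j)) :=
          mul_le_mul_of_nonneg_left (hle _ _) (hnonneg i j)
      _ = a * (N i j * Real.exp (x i + x j)) + b * (N i j * Real.exp (y i + y j)) := by ring
  have termlt :
      N i0 j0 * Real.exp ((a * x i0 + b * y i0) + (a * x j0 + b * y j0))
        < a * (N i0 j0 * Real.exp (x i0 + x j0)) + b * (N i0 j0 * Real.exp (y i0 + y j0)) := by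
    have he : (a * x i0 + b * y i0) + (a * x j0 + b * y j0)
        = a * (x i0 + x j0) + b * (y i0 + y j0) := by ring
    rw [he]
    calc N i0 j0 * Real.exp (a * (x i0 + x j0) + b * (y i0 + y j0))
        < N i0 j0 * (a * Real.exp (x i0 + x j0) + b * Real.exp (y i0 + y j0)) :=
          (mul_lt_mul_iff_right₀ hN0).mpr (hlt _ _ hne0)
      _ = _ := by ring
  have hmain : ∑ i, ∑ j, N i j * Real.exp ((a * x i + b * y i) + (a * x j + b * y j))
      < a * ∑ i, ∑ j, N i j * Real.exp (x i + x j)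
        + b * ∑ i, ∑ j, N i j * Real.exp (y i + y j) := by
    have h1 : ∑ i, ∑ j, N i j * Real.exp ((a * x i + b * y i) + (a * x j + b * y j))
        < ∑ i, ∑ j, (a * (N i j * Real.exp (x i + x j)) + b * (N i j * Real.exp (y i + y j))) := by
      apply Finset.sum_lt_sum
      · intro i _
        exact Finset.sum_le_sum fun j _ => termle i j
      · exact ⟨i0, Finset.mem_univ i0,
          Finset.sum_lt_sum (fun j _ => termle i0 j) ⟨j0, Finset.mem_univ j0, termlt⟩⟩
    have h2 : ∑ i, ∑ j, (a * (N i j * Real.exp (x i + x j)) + b * (N i j * Real.exp (y i + y j)))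
        = a * ∑ i, ∑ j, N i j * Real.exp (x i + x j)
          + b * ∑ i, ∑ j, N i j * Real.exp (y i + y j) := by
      simp [Finset.sum_add_distrib, Finset.mul_sum]
    linarith
  have hlin : ∑ i, (a * x i + b * y i) * (∑ j, N i j * (s i * s j))
      = a * ∑ i, x i * (∑ j, N i j * (s i * s j))
        + b * ∑ i, y i * (∑ j, N i j * (s i * s j)) := by
    rw [Finset.mul_sum, Finset.mul_sum, ← Finset.sum_add_distrib]
    apply Finset.sum_congr rfl
    intro i _
    ring
  have hev : ∀ i : Fin W, (a • x + b • y) i = a * x i + b * y i := by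
    intro i; simp
  simp only [smul_eq_mul, hev]
  linarith


lemma stmt16_edges (W : ℕ) (N : Matrix (Fin W) (Fin W) ℝ)
    (hsymm : ∀ a b, N a b = N b a) (hnonneg : ∀ a b, 0 ≤ N a b)
    (s : Fin W → ℝ) (hs : ∀ i, 0 < s i) (z : Fin W → ℝ)
    (hz : ∀ i, ∑ j, N i j * (Real.exp (z i + z j) - s i * s j) = 0) :
    ∀ i j, 0 < N i j → z i + z j = Real.log (s i) + Real.log (s j) := by
  set w : Fin W → ℝ := fun i => Real.log (s i) with hw
  have hexp : ∀ i j, Real.exp (w i + w j) = s i * s j := by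
    intro i j
    rw [Real.exp_add, Real.exp_log (hs i), Real.exp_log (hs j)]
  set E : Fin W → Fin W → ℝ := fun i j => Real.exp (z i + z j) - s i * s j with hE
  have hrow : ∀ i, ∑ j, N i j * ((z i - w i) * E i j) = 0 := by
    intro i
    have : ∑ j, N i j * ((z i - w i) * E i j) = (z i - w i) * ∑ j, N i j * E i j := by
      rw [Finset.mul_sum]; apply Finset.sum_congr rfl; intro j _; ring
    rw [this, hz i, mul_zero]
  have hS : ∑ i, ∑ j, N i j * (((z i + z j) - (w i + w j)) * E i j) = 0 := by
    have split : ∀ i j, N i j * (((z i + z j) - (w i + w j)) * E i j)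
        = N i j * ((z i - w i) * E i j) + N i j * ((z j - w j) * E i j) := by
      intro i j; ring
    calc ∑ i, ∑ j, N i j * (((z i + z j) - (w i + w j)) * E i j)
        = ∑ i, (∑ j, N i j * ((z i - w i) * E i j) + ∑ j, N i j * ((z j - w j) * E i j)) := by
          apply Finset.sum_congr rfl; intro i _
          rw [← Finset.sum_add_distrib]
          exact Finset.sum_congr rfl fun j _ => split i j
      _ = ∑ i, ∑ j, N i j * ((z i - w i) * E i j)
          + ∑ i, ∑ j, N i j * ((z j - w j) * E i j) := Finset.sum_add_distrib
      _ = 0 + ∑ j, ∑ i, N i j * ((z j - w j) * E i j) := by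
          congr 1
          · exact Finset.sum_eq_zero fun i _ => hrow i
          · exact Finset.sum_comm
      _ = ∑ j, ∑ i, N j i * ((z j - w j) * E j i) := by
          rw [zero_add]
          apply Finset.sum_congr rfl; intro j _
          apply Finset.sum_congr rfl; intro i _
          have : E i j = E j i := by simp only [hE]; rw [add_comm (z i), mul_comm (s i)]
          rw [hsymm i j, this]
      _ = 0 := Finset.sum_eq_zero fun j _ => hrow j
  have hterm : ∀ i j, 0 ≤ N i j * (((z i + z j) - (w i + w j)) * E i j) := by
    intro i j
    apply mul_nonneg (hnonneg i j)
    have hEe : E i j = Real.exp (z i + z j) - Real.exp (w i + w j) := by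
      rw [hexp]
    rw [hEe]
    rcases le_total (z i + z j) (w i + w j) with h | h
    · exact mul_nonneg_iff.mpr (Or.inr ⟨by linarith, by simp [Real.exp_le_exp, h]⟩)
    · exact mul_nonneg (by linarith) (by simp [Real.exp_le_exp, h])
  have hzero : ∀ i j, N i j * (((z i + z j) - (w i + w j)) * E i j) = 0 := by
    have h1 := (Finset.sum_eq_zero_iff_of_nonneg (fun i _ =>
      Finset.sum_nonneg fun j _ => hterm i j)).mp hS
    intro i j
    exact (Finset.sum_eq_zero_iff_of_nonneg fun j _ => hterm i j).mp
      (h1 i (Finset.mem_univ i)) j (Finset.mem_univ j)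
  intro i j hN
  by_contra hne
  have h1 : ((z i + z j) - (w i + w j)) * E i j ≠ 0 := by
    have ha : (z i + z j) - (w i + w j) ≠ 0 := sub_ne_zero.mpr hne
    have hb : E i j ≠ 0 := by
      show Real.exp (z i + z j) - s i * s j ≠ 0
      rw [← hexp i j]
      exact sub_ne_zero.mpr (fun h => hne (Real.exp_injective h))
    exact mul_ne_zero ha hb
  exact h1 ((mul_eq_zero.mp (hzero i j)).resolve_left (ne_of_gt hN))

lemma stmt16_deriv (W : ℕ) (N : Matrix (Fin W) (Fin W) ℝ) (hdiag : ∀ a, N a a = 0)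
    (s : Fin W → ℝ) (z : Fin W → ℝ) (i j : Fin W) :
    HasDerivAt (fun t : ℝ =>
          ∑ k, N i k *
              Real.exp ((Function.update z j t) i + (Function.update z j t) k)
          - ∑ k, N i k * (s i * s k))
        (if i = j then ∑ k, N i k * Real.exp (z i + z k)
         else N i j * Real.exp (z i + z j)) (z j) := by
  have hsum : HasDerivAt (fun t : ℝ =>
      ∑ k, N i k * Real.exp ((Function.update z j t) i + (Function.update z j t) k))
      (if i = j then ∑ k, N i k * Real.exp (z i + z k)
       else N i j * Real.exp (z i + z j)) (z j) := by
    by_cases hij : i = j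
    · subst hij
      simp only [if_pos rfl, ↓reduceIte]
      apply HasDerivAt.fun_sum
      intro k _
      by_cases hk : k = i
      · subst hk
        have : (fun t : ℝ => N k k * Real.exp ((Function.update z k t) k + (Function.update z k t) k)) = fun _ => 0 := by
          funext t; simp [hdiag]
        rw [this, hdiag k, zero_mul]
        exact hasDerivAt_const _ 0
      · have : (fun t : ℝ => N i k * Real.exp ((Function.update z i t) i + (Function.update z i t) k)) = fun t => N i k * Real.exp (t + z k) := by
          funext t; rw [Function.update_self, Function.update_of_ne hk]
        rw [this]
        have h1 : HasDerivAt (fun t : ℝ => Real.exp (t + z k)) (Real.exp (z i + z k)) (z i) := by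
          have := ((hasDerivAt_id (z i)).add_const (z k)).exp
          simpa using this
        simpa using h1.const_mul (N i k)
    · simp only [if_neg hij]
      have key : (fun t : ℝ =>
          ∑ k, N i k * Real.exp ((Function.update z j t) i + (Function.update z j t) k))
          = fun t => (N i j * Real.exp (z i + t)) + ∑ k ∈ Finset.univ.erase j, N i k * Real.exp (z i + z k) := by
        funext t
        rw [← Finset.add_sum_erase _ _ (Finset.mem_univ j)]
        congr 1
        · rw [Function.update_of_ne hij, Function.update_self]
        · apply Finset.sum_congr rfl
          intro k hk
          rw [Function.update_of_ne hij, Function.update_of_ne (Finset.ne_of_mem_erase hk)]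
      rw [key]
      have h1 : HasDerivAt (fun t : ℝ => Real.exp (z i + t)) (Real.exp (z i + z j)) (z j) := by
        have := ((hasDerivAt_id (z j)).const_add (z i)).exp
        simpa using this
      simpa using (h1.const_mul (N i j)).add_const (∑ k ∈ Finset.univ.erase j, N i k * Real.exp (z i + z k))
  simpa using hsum.sub_const (∑ k, N i k * (s i * s k))

/-- For `g₀(z) = (1/2) Σ_{a,b} N_{ab} e^{z_a+z_b} − Σ_a z_a Σ_b N_{ab} s_a s_b`:
(1) the Hessian of `g₀` at `z` is the signless Laplacian with weights `N_{ij} e^{z_i+z_j}`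
(entrywise: `N_{ij}e^{z_i+z_j}` off the diagonal and `Σ_k N_{ik} e^{z_i+z_k}` on it);
(2) if the graph of `N` is connected and non-bipartite, `g₀` is strictly convex on `ℝ^W`;
(3) `z = ln s` is the unique critical point of `g₀` (for entrywise positive `s`). -/
theorem stmt16 (W : ℕ) (N : Matrix (Fin W) (Fin W) ℝ)
    (hsymm : ∀ a b, N a b = N b a) (hnonneg : ∀ a b, 0 ≤ N a b)
    (hdiag : ∀ a, N a a = 0)
    (G : SimpleGraph (Fin W)) (hadj : ∀ i j, G.Adj i j ↔ i ≠ j ∧ 0 < N i j)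
    (hconn : G.Connected)
    (hodd : ∃ (v : Fin W) (p : G.Walk v v), p.IsCycle ∧ Odd p.length)
    (s : Fin W → ℝ) (hs : ∀ i, 0 < s i) :
    (∀ (z : Fin W → ℝ) (i j : Fin W),
      HasDerivAt (fun t : ℝ =>
          ∑ k, N i k *
              Real.exp ((Function.update z j t) i + (Function.update z j t) k)
          - ∑ k, N i k * (s i * s k))
        (if i = j then ∑ k, N i k * Real.exp (z i + z k)
         else N i j * Real.exp (z i + z j)) (z j))
    ∧ StrictConvexOn ℝ Set.univ (fun z : Fin W → ℝ =>
        (1/2) * ∑ a, ∑ b, N a b * Real.exp (z a + z b)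
          - ∑ a, z a * ∑ b, N a b * (s a * s b))
    ∧ (∀ z : Fin W → ℝ,
        (∀ i, ∑ j, N i j * (Real.exp (z i + z j) - s i * s j) = 0)
          ↔ z = fun i => Real.log (s i)) := by
  refine ⟨fun z i j => stmt16_deriv W N hdiag s z i j,
    stmt16_sc W N hsymm hnonneg G hadj hconn hodd s, fun z => ⟨?_, ?_⟩⟩
  · intro hz
    have hedge := stmt16_edges W N hsymm hnonneg s hs z hz
    have key : ∀ i, z i - Real.log (s i) = 0 := by
      apply stmt16_graph G hconn hodd
      intro i j hij
      obtain ⟨hne, hpos⟩ := (hadj i j).mp hij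
      have := hedge i j hpos
      linarith
    funext i
    have := key i
    linarith
  · intro hz
    subst hz
    intro i
    apply Finset.sum_eq_zero
    intro j _
    have : Real.exp (Real.log (s i) + Real.log (s j)) = s i * s j := by
      rw [Real.exp_add, Real.exp_log (hs i), Real.exp_log (hs j)]
    simp [this]
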